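/- Let (A,C)_ψ be an entwining structure. The functor M_A → M_A^C(ψ) sending a right A-module M to M⊗C (with action (m⊗c)·a = m·ψ(c⊗a) and coaction M⊗Δ) is right adjoint to the forgetful functor M_A^C(ψ) → M_A. Concretely, for every M ∈ M_A and N ∈ M_A^C(ψ) there is a bijection, natural in M and N, between right A-module maps N → M and morphisms N → M⊗C in M_A^C(ψ) (right A-linear right C-colinear maps), given by f ↦ (f⊗C)∘Δ_N with inverse g ↦ (M⊗ε)∘g. -/
import Mathlib


open TensorProduct LinearMap

/-- An entwining structure `(A, C)_ψ`. -/
structure Entwining (k A C : Type) [Field k] [Ring A] [Algebra k A]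
    [AddCommGroup C] [Module k C] [Coalgebra k C] where
  ψ : C ⊗[k] A →ₗ[k] A ⊗[k] C
  entw_mul : ψ ∘ₗ (mul' k A).lTensor C =
    (mul' k A).rTensor C ∘ₗ (TensorProduct.assoc k A A C).symm.toLinearMap ∘ₗ
      ψ.lTensor A ∘ₗ (TensorProduct.assoc k A C A).toLinearMap ∘ₗ
      ψ.rTensor A ∘ₗ (TensorProduct.assoc k C A A).symm.toLinearMap
  entw_unit : ∀ c : C, ψ (c ⊗ₜ[k] 1) = 1 ⊗ₜ[k] c
  entw_comul : (Coalgebra.comul (R := k) (A := C)).lTensor A ∘ₗ ψ =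
    (TensorProduct.assoc k A C C).toLinearMap ∘ₗ ψ.rTensor C ∘ₗ
      (TensorProduct.assoc k C A C).symm.toLinearMap ∘ₗ ψ.lTensor C ∘ₗ
      (TensorProduct.assoc k C C A).toLinearMap ∘ₗ
      (Coalgebra.comul (R := k) (A := C)).rTensor A
  entw_counit : (TensorProduct.rid k A).toLinearMap ∘ₗ
      (Coalgebra.counit (R := k) (A := C)).lTensor A ∘ₗ ψ =
    (TensorProduct.lid k A).toLinearMap ∘ₗ (Coalgebra.counit (R := k) (A := C)).rTensor A

/-- A right `C`-comodule structure on `V`. -/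
structure RComod (k C V : Type) [Field k] [AddCommGroup C] [Module k C] [Coalgebra k C]
    [AddCommGroup V] [Module k V] where
  ρ : V →ₗ[k] V ⊗[k] C
  coassoc : (Coalgebra.comul (R := k) (A := C)).lTensor V ∘ₗ ρ =
    (TensorProduct.assoc k V C C).toLinearMap ∘ₗ ρ.rTensor C ∘ₗ ρ
  counit_id : (TensorProduct.rid k V).toLinearMap ∘ₗ
      (Coalgebra.counit (R := k) (A := C)).lTensor V ∘ₗ ρ = LinearMap.id

/-- A left `C`-comodule structure on `V`. -/
structure LComod (k C V : Type) [Field k] [AddCommGroup C] [Module k C] [Coalgebra k C]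
    [AddCommGroup V] [Module k V] where
  ρ : V →ₗ[k] C ⊗[k] V
  coassoc : (Coalgebra.comul (R := k) (A := C)).rTensor V ∘ₗ ρ =
    (TensorProduct.assoc k C C V).symm.toLinearMap ∘ₗ ρ.lTensor C ∘ₗ ρ
  counit_id : (TensorProduct.lid k V).toLinearMap ∘ₗ
      (Coalgebra.counit (R := k) (A := C)).rTensor V ∘ₗ ρ = LinearMap.id

/-- A right `A`-module structure (`k`-linear) on `M`. -/
structure RAct (k A M : Type) [Field k] [Ring A] [Algebra k A]
    [AddCommGroup M] [Module k M] where
  act : M ⊗[k] A →ₗ[k] M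
  act_one : ∀ m : M, act (m ⊗ₜ[k] 1) = m
  act_mul : ∀ (m : M) (a b : A),
    act (act (m ⊗ₜ[k] a) ⊗ₜ[k] b) = act (m ⊗ₜ[k] (a * b))

variable {k A C M : Type} [Field k] [Ring A] [Algebra k A]
  [AddCommGroup C] [Module k C] [Coalgebra k C] [AddCommGroup M] [Module k M]

/-- The compatibility condition making `M` an entwined `(A,C)_ψ`-module. -/
def EntwCompat (E : Entwining k A C) (α : RAct k A M) (ρM : RComod k C M) : Prop :=
  ρM.ρ ∘ₗ α.act = α.act.rTensor C ∘ₗ (TensorProduct.assoc k M A C).symm.toLinearMap ∘ₗ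
    E.ψ.lTensor M ∘ₗ (TensorProduct.assoc k M C A).toLinearMap ∘ₗ ρM.ρ.rTensor A

/-- The `A`-action on `M ⊗ C` induced by an entwining: `(m⊗c)·a = m·a_α ⊗ c^α`. -/
noncomputable def entwAct (E : Entwining k A C) (ν : M ⊗[k] A →ₗ[k] M) :
    (M ⊗[k] C) ⊗[k] A →ₗ[k] M ⊗[k] C :=
  ν.rTensor C ∘ₗ (TensorProduct.assoc k M A C).symm.toLinearMap ∘ₗ
    E.ψ.lTensor M ∘ₗ (TensorProduct.assoc k M C A).toLinearMap

/-- The `C`-coaction `M ⊗ Δ` on `M ⊗ C`. -/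
noncomputable def coactMC (k C M : Type) [Field k] [AddCommGroup C] [Module k C]
    [Coalgebra k C] [AddCommGroup M] [Module k M] :
    M ⊗[k] C →ₗ[k] (M ⊗[k] C) ⊗[k] C :=
  (TensorProduct.assoc k M C C).symm.toLinearMap ∘ₗ
    (Coalgebra.comul (R := k) (A := C)).lTensor M

/-- The coaction on `V ⊗ A` induced by an entwining: `v⊗a ↦ v₍₀₎ ⊗ ψ(v₍₁₎⊗a)`. -/
noncomputable def entwCoact {V : Type} [AddCommGroup V] [Module k V]
    (E : Entwining k A C) (ρV : V →ₗ[k] V ⊗[k] C) :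
    V ⊗[k] A →ₗ[k] (V ⊗[k] A) ⊗[k] C :=
  (TensorProduct.assoc k V A C).symm.toLinearMap ∘ₗ E.ψ.lTensor V ∘ₗ
    (TensorProduct.assoc k V C A).toLinearMap ∘ₗ ρV.rTensor A

/-- The action `V ⊗ μ` on `V ⊗ A`. -/
noncomputable def actVA (k : Type) (A V : Type) [Field k] [Ring A] [Algebra k A]
    [AddCommGroup V] [Module k V] :
    (V ⊗[k] A) ⊗[k] A →ₗ[k] V ⊗[k] A :=
  (mul' k A).lTensor V ∘ₗ (TensorProduct.assoc k V A A).toLinearMap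

/-- The canonical map `A ⊗ₖ A → A ⊗ C`, `a ⊗ a' ↦ a a'₍₀₎ ⊗ a'₍₁₎`. -/
noncomputable def canHat (ΔA : A →ₗ[k] A ⊗[k] C) : A ⊗[k] A →ₗ[k] A ⊗[k] C :=
  (mul' k A).rTensor C ∘ₗ (TensorProduct.assoc k A A C).symm.toLinearMap ∘ₗ ΔA.lTensor A

/-- The subspace of relations defining `A ⊗_B A` inside `A ⊗ₖ A`. -/
noncomputable def relSub (k : Type) [Field k] {A : Type} [Ring A] [Algebra k A]
    (B : Set A) : Submodule k (A ⊗[k] A) :=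
  Submodule.span k {x | ∃ a a' b : A, b ∈ B ∧ x = (a * b) ⊗ₜ[k] a' - a ⊗ₜ[k] (b * a')}

/-- Convolution product of `f g : C → A`. -/
noncomputable def conv (f g : C →ₗ[k] A) : C →ₗ[k] A :=
  mul' k A ∘ₗ TensorProduct.map f g ∘ₗ Coalgebra.comul (R := k)

/-- The convolution unit `η ∘ ε`. -/
noncomputable def convUnit (k C A : Type) [Field k] [Ring A] [Algebra k A]
    [AddCommGroup C] [Module k C] [Coalgebra k C] : C →ₗ[k] A :=
  Algebra.linearMap k A ∘ₗ Coalgebra.counit (R := k)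

section Aux
variable {k : Type} [Field k]
variable {A C M N : Type} [AddCommGroup A] [Module k A] [AddCommGroup C] [Module k C]
  [AddCommGroup M] [Module k M] [AddCommGroup N] [Module k N]

/-- Naturality of the middle piece of the entwined action in the module variable. -/
lemma aux_mid (f : N →ₗ[k] M) (φ : C ⊗[k] A →ₗ[k] A ⊗[k] C) :
    ((f.rTensor A).rTensor C) ∘ₗ (TensorProduct.assoc k N A C).symm.toLinearMap ∘ₗ
      φ.lTensor N ∘ₗ (TensorProduct.assoc k N C A).toLinearMap =
    (TensorProduct.assoc k M A C).symm.toLinearMap ∘ₗ φ.lTensor M ∘ₗ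
      (TensorProduct.assoc k M C A).toLinearMap ∘ₗ (f.rTensor C).rTensor A := by
  apply TensorProduct.ext_threefold
  intro n c a
  simp only [comp_apply, LinearEquiv.coe_coe, assoc_tmul, lTensor_tmul, rTensor_tmul]
  have : (f.rTensor A).rTensor C = map (map f LinearMap.id) LinearMap.id := rfl
  rw [this, map_map_assoc_symm, map_tmul, map_id, id_coe, id_eq]

/-- Naturality of the associator in the first variable. -/
lemma aux_assoc (f : N →ₗ[k] M) :
    ((f.rTensor C).rTensor C) ∘ₗ (TensorProduct.assoc k N C C).symm.toLinearMap =
    (TensorProduct.assoc k M C C).symm.toLinearMap ∘ₗ f.rTensor (C ⊗[k] C) := by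
  apply TensorProduct.ext'
  intro n x
  have : (f.rTensor C).rTensor C = map (map f LinearMap.id) LinearMap.id := rfl
  simp only [comp_apply, LinearEquiv.coe_coe, rTensor_tmul, this, map_map_assoc_symm,
    map_tmul, map_id, id_coe, id_eq]

/-- Naturality of `rid`. -/
lemma aux_rid (f : N →ₗ[k] M) :
    (TensorProduct.rid k M).toLinearMap ∘ₗ f.rTensor k =
      f ∘ₗ (TensorProduct.rid k N).toLinearMap := by
  apply TensorProduct.ext'
  intro n r
  simp [TensorProduct.smul_tmul', map_smul]

lemma aux_eps (ε : C →ₗ[k] k) :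
    ((ε.lTensor M).rTensor C) ∘ₗ (TensorProduct.assoc k M C C).symm.toLinearMap =
    (TensorProduct.assoc k M k C).symm.toLinearMap ∘ₗ ((ε.rTensor C).lTensor M) := by
  apply TensorProduct.ext'
  intro m x
  have h1 : (ε.lTensor M).rTensor C = map (map LinearMap.id ε) LinearMap.id := rfl
  have h2 : ε.rTensor C = map ε LinearMap.id := rfl
  simp only [comp_apply, LinearEquiv.coe_coe, lTensor_tmul, h1, h2, map_map_assoc_symm,
    map_tmul, id_coe, id_eq]

lemma aux_final :
    ((TensorProduct.rid k M).toLinearMap).rTensor C ∘ₗ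
      (TensorProduct.assoc k M k C).symm.toLinearMap ∘ₗ
      (TensorProduct.mk k k C 1).lTensor M = LinearMap.id := by
  apply TensorProduct.ext'
  intro m c
  simp

end Aux

/-- for an entwining structure `(A,C)_ψ`, the functor `M ↦ M ⊗ C` from
right `A`-modules to entwined modules is right adjoint to the forgetful functor:
`f ↦ (f ⊗ C)∘Δ_N` is a bijection (natural in both arguments) from right `A`-linear
maps `N → M` to morphisms `N → M ⊗ C` of entwined modules, with inverse
`g ↦ (M ⊗ ε)∘g`. -/
theorem statement12 {k A C M M' N N' : Type} [Field k] [Ring A] [Algebra k A]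
    [AddCommGroup C] [Module k C] [Coalgebra k C]
    [AddCommGroup M] [Module k M] [AddCommGroup M'] [Module k M']
    [AddCommGroup N] [Module k N] [AddCommGroup N'] [Module k N']
    (E : Entwining k A C)
    (νM : RAct k A M) (νM' : RAct k A M')
    (νN : RAct k A N) (ρN : RComod k C N) (hN : EntwCompat E νN ρN)
    (νN' : RAct k A N') (ρN' : RComod k C N') (hN' : EntwCompat E νN' ρN') :
    let Ξ : (N →ₗ[k] M) → (N →ₗ[k] M ⊗[k] C) := fun f => f.rTensor C ∘ₗ ρN.ρ
    let Λ : (N →ₗ[k] M ⊗[k] C) → (N →ₗ[k] M) := fun g =>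
      (TensorProduct.rid k M).toLinearMap ∘ₗ
        (Coalgebra.counit (R := k) (A := C)).lTensor M ∘ₗ g
    -- `Ξ f` is a morphism in `M_A^C(ψ)` whenever `f` is right `A`-linear:
    (∀ f : N →ₗ[k] M, f ∘ₗ νN.act = νM.act ∘ₗ f.rTensor A →
      ((Ξ f) ∘ₗ νN.act = entwAct E νM.act ∘ₗ (Ξ f).rTensor A ∧
       coactMC k C M ∘ₗ (Ξ f) = (Ξ f).rTensor C ∘ₗ ρN.ρ)) ∧
    -- the two assignments are mutually inverse:
    (∀ f : N →ₗ[k] M, f ∘ₗ νN.act = νM.act ∘ₗ f.rTensor A → Λ (Ξ f) = f) ∧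
    (∀ g : N →ₗ[k] M ⊗[k] C,
      g ∘ₗ νN.act = entwAct E νM.act ∘ₗ g.rTensor A →
      coactMC k C M ∘ₗ g = g.rTensor C ∘ₗ ρN.ρ →
      Ξ (Λ g) = g) ∧
    -- naturality in `M`:
    (∀ (u : M →ₗ[k] M'), u ∘ₗ νM.act = νM'.act ∘ₗ u.rTensor A →
      ∀ f : N →ₗ[k] M, (u ∘ₗ f).rTensor C ∘ₗ ρN.ρ = u.rTensor C ∘ₗ Ξ f) ∧
    -- naturality in `N`:
    (∀ (v : N' →ₗ[k] N), v ∘ₗ νN'.act = νN.act ∘ₗ v.rTensor A →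
      ρN.ρ ∘ₗ v = v.rTensor C ∘ₗ ρN'.ρ →
      ∀ f : N →ₗ[k] M, (f ∘ₗ v).rTensor C ∘ₗ ρN'.ρ = Ξ f ∘ₗ v) := by
  intro Ξ Λ
  have hNeq : ρN.ρ ∘ₗ νN.act = νN.act.rTensor C ∘ₗ (TensorProduct.assoc k N A C).symm.toLinearMap ∘ₗ
      E.ψ.lTensor N ∘ₗ (TensorProduct.assoc k N C A).toLinearMap ∘ₗ ρN.ρ.rTensor A := hN
  refine ⟨?_, ?_, ?_, ?_, ?_⟩
  · intro f hf
    constructor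
    · apply LinearMap.ext; intro x
      have h1 := LinearMap.congr_fun hNeq x
      simp only [Ξ, comp_apply, LinearEquiv.coe_coe] at h1 ⊢
      rw [h1]
      have e1 : f.rTensor C ∘ₗ νN.act.rTensor C = νM.act.rTensor C ∘ₗ (f.rTensor A).rTensor C := by
        rw [← rTensor_comp, hf, rTensor_comp]
      have e2 := LinearMap.congr_fun e1
        ((TensorProduct.assoc k N A C).symm ((E.ψ.lTensor N)
          ((TensorProduct.assoc k N C A) (ρN.ρ.rTensor A x))))
      simp only [comp_apply] at e2
      rw [e2]
      have e3 := LinearMap.congr_fun (aux_mid f E.ψ) (ρN.ρ.rTensor A x)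
      simp only [comp_apply, LinearEquiv.coe_coe] at e3
      rw [e3]
      simp only [entwAct, rTensor_comp, comp_apply, LinearEquiv.coe_coe]
    · apply LinearMap.ext; intro n
      have c1 : (Coalgebra.comul (R := k) (A := C)).lTensor M ∘ₗ f.rTensor C =
          f.rTensor (C ⊗[k] C) ∘ₗ (Coalgebra.comul (R := k) (A := C)).lTensor N := by
        rw [lTensor_comp_rTensor, rTensor_comp_lTensor]
      have c1' := LinearMap.congr_fun c1 (ρN.ρ n)
      have c2 := LinearMap.congr_fun ρN.coassoc n
      have c3 := LinearMap.congr_fun (aux_assoc (C := C) f)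
        ((TensorProduct.assoc k N C C) (ρN.ρ.rTensor C (ρN.ρ n)))
      simp only [comp_apply, LinearEquiv.coe_coe] at c1' c2 c3
      simp only [Ξ, coactMC, comp_apply, LinearEquiv.coe_coe]
      rw [c1', c2, ← c3, LinearEquiv.symm_apply_apply, rTensor_comp, comp_apply]
  · intro f hf
    apply LinearMap.ext; intro n
    have c1 : (Coalgebra.counit (R := k) (A := C)).lTensor M ∘ₗ f.rTensor C =
        f.rTensor k ∘ₗ (Coalgebra.counit (R := k) (A := C)).lTensor N := by
      rw [lTensor_comp_rTensor, rTensor_comp_lTensor]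
    have c1' := LinearMap.congr_fun c1 (ρN.ρ n)
    have c2 := LinearMap.congr_fun (aux_rid (k := k) f)
      ((Coalgebra.counit (R := k) (A := C)).lTensor N (ρN.ρ n))
    have c3 := LinearMap.congr_fun ρN.counit_id n
    simp only [comp_apply, LinearEquiv.coe_coe, id_coe, id_eq] at c1' c2 c3
    simp only [Λ, Ξ, comp_apply, LinearEquiv.coe_coe]
    rw [c1', c2, c3]
  · intro g hg1 hg2
    apply LinearMap.ext; intro n
    have h2 := LinearMap.congr_fun hg2 n
    simp only [coactMC, comp_apply, LinearEquiv.coe_coe] at h2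
    simp only [Ξ, Λ, rTensor_comp, comp_apply, LinearEquiv.coe_coe]
    rw [← h2]
    have e1 := LinearMap.congr_fun (aux_eps (M := M) (Coalgebra.counit (R := k) (A := C)))
      ((Coalgebra.comul (R := k) (A := C)).lTensor M (g n))
    simp only [comp_apply, LinearEquiv.coe_coe] at e1
    rw [e1]
    have e2 : ((Coalgebra.counit (R := k) (A := C)).rTensor C).lTensor M ∘ₗ
        (Coalgebra.comul (R := k) (A := C)).lTensor M =
        (TensorProduct.mk k k C 1).lTensor M := by
      rw [← lTensor_comp, Coalgebra.rTensor_counit_comp_comul]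
    have e2' := LinearMap.congr_fun e2 (g n)
    simp only [comp_apply] at e2'
    rw [e2']
    have e3 := LinearMap.congr_fun (aux_final (k := k) (C := C) (M := M)) (g n)
    simp only [comp_apply, LinearEquiv.coe_coe, id_coe, id_eq] at e3
    exact e3
  · intro u hu f
    simp only [Ξ]
    rw [rTensor_comp, comp_assoc]
  · intro v hv1 hv2 f
    simp only [Ξ]
    rw [rTensor_comp, comp_assoc, ← hv2, ← comp_assoc]
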